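/- Let 0 < q < 1 and let λ be real with |λ| < 1. Define D(s) := Σ_{u=1}^s ĥ_{−q}(s−u+1)·F_{q,λ}(u) for integers s ≥ 0 (empty sum for s = 0). Then for every positive integer t, D(t) − D(t−1) = ĥ_{−q}(t) + λ·F_{q,λ}(t); that is, the Riemann–Liouville fractional difference of order q of the discrete Mittag-Leffler function satisfies ∇_1^q F_{q,λ}(t) = ĥ_{−q}(t) + λ·F_{q,λ}(t). -/

import Mathlib

/-- Generalized binomial coefficient `ĥ_α(x) = Γ(x+α)/(Γ(α+1)·Γ(x))`. -/
noncomputable def hhat (α x : ℝ) : ℝ :=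
  Real.Gamma (x + α) / (Real.Gamma (α + 1) * Real.Gamma x)

/-- Discrete Mittag-Leffler function `F_{q,λ}(t) = Σ_m ĥ_{qm}(t)·λ^m` for positive integers
`t` (with `F_{q,λ}(0) = 1`). -/
noncomputable def dML (q lam : ℝ) (t : ℕ) : ℝ :=
  if t = 0 then 1 else ∑' m : ℕ, hhat (q * m) (t : ℝ) * lam ^ m

/-- The fractional sum `D(s) = ∇_1^{−(1−q)} F_{q,λ}(s) = Σ_{u=1}^s ĥ_{−q}(s−u+1)·F_{q,λ}(u)`. -/
noncomputable def fracSumML (q lam : ℝ) (s : ℕ) : ℝ :=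
  ∑ u ∈ Finset.Icc 1 s, hhat (-q) ((s : ℝ) - (u : ℝ) + 1) * dML q lam u

open Real Finset

lemma hhat_x_zero (α : ℝ) : hhat α 0 = 0 := by
  simp [hhat, Real.Gamma_zero]

lemma hhat_one {α : ℝ} (h : Real.Gamma (α + 1) ≠ 0) : hhat α 1 = 1 := by
  simp [hhat, Real.Gamma_one, add_comm (1:ℝ) α, div_self h]

lemma hhat_pascal {α : ℝ} (hα : α ≠ 0) (hΓ : Real.Gamma α ≠ 0) (n : ℕ) (hn : 1 ≤ n)
    (hx : (n : ℝ) + α - 1 ≠ 0) :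
    hhat α n = hhat (α - 1) n + hhat α ((n : ℝ) - 1) := by
  have hA1 : Real.Gamma (α + 1) = α * Real.Gamma α := Real.Gamma_add_one hα
  rcases Nat.lt_or_ge n 2 with h2 | h2
  · interval_cases n
    · push_cast
      rw [hhat_one (by rw [hA1]; exact mul_ne_zero hα hΓ)]
      have : hhat (α - 1) 1 = 1 := by
        have := hhat_one (α := α - 1) (by rw [sub_add_cancel]; exact hΓ)
        simpa using this
      rw [this]
      simp [hhat_x_zero]
  · have hn1 : (1:ℝ) ≤ (n:ℝ) - 1 := by
      have : (2:ℝ) ≤ (n:ℝ) := by exact_mod_cast h2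
      linarith
    have hΓn1 : 0 < Real.Gamma ((n:ℝ) - 1) := Real.Gamma_pos_of_pos (by linarith)
    have hGn : Real.Gamma (n:ℝ) = ((n:ℝ) - 1) * Real.Gamma ((n:ℝ) - 1) := by
      have := Real.Gamma_add_one (s := (n:ℝ) - 1) (by linarith)
      rw [sub_add_cancel] at this
      exact this
    have hGna : Real.Gamma ((n:ℝ) + α) = ((n:ℝ) + α - 1) * Real.Gamma ((n:ℝ) + α - 1) := by
      have := Real.Gamma_add_one (s := (n:ℝ) + α - 1) hx
      rw [sub_add_cancel] at this
      exact this
    unfold hhat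
    rw [hA1, hGn, hGna]
    have e1 : (n:ℝ) + (α - 1) = (n:ℝ) + α - 1 := by ring
    have e2 : α - 1 + 1 = α := by ring
    have e3 : (n:ℝ) - 1 + α = (n:ℝ) + α - 1 := by ring
    rw [e1, e2, e3]
    field_simp
    ring

lemma Gamma_prod {x : ℝ} (hx : -1 < x) (n : ℕ) :
    Real.Gamma (x + 1 + n) = (∏ j ∈ range n, (x + 1 + j)) * Real.Gamma (x + 1) := by
  induction n with
  | zero => simp
  | succ k ih =>
    have hne : x + 1 + k ≠ 0 := by have : (0:ℝ) ≤ k := Nat.cast_nonneg k; linarith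
    have : Real.Gamma (x + 1 + (k + 1 : ℕ)) = (x + 1 + k) * Real.Gamma (x + 1 + k) := by
      have := Real.Gamma_add_one (s := x + 1 + k) hne
      rw [← this]; push_cast; ring_nf
    rw [this, ih, prod_range_succ]
    ring

lemma hhat_prod {x : ℝ} (hx : -1 < x) {n : ℕ} (hn : 1 ≤ n) :
    hhat x n = (∏ j ∈ range (n - 1), (x + 1 + j)) / Real.Gamma n := by
  have h1 : (n : ℝ) + x = x + 1 + ((n - 1 : ℕ) : ℝ) := by
    have : (1:ℝ) ≤ (n:ℝ) := by exact_mod_cast hn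
    push_cast [Nat.cast_sub hn]; ring
  have hΓ : Real.Gamma (x + 1) ≠ 0 := (Real.Gamma_pos_of_pos (by linarith)).ne'
  unfold hhat
  rw [h1, Gamma_prod hx]
  rw [mul_comm (∏ j ∈ range (n - 1), (x + 1 + ↑j)) (Real.Gamma (x+1)), add_comm x 1]
  rw [mul_div_mul_left _ _ (by rwa [add_comm])]

lemma sum_reflect (f : ℝ → ℝ) (s : ℕ) :
    ∑ u ∈ Icc 1 s, f ((s : ℝ) - (u : ℝ) + 1) = ∑ u ∈ Icc 1 s, f (u : ℝ) := by
  refine Finset.sum_nbij' (i := fun u => s + 1 - u) (j := fun u => s + 1 - u) ?_ ?_ ?_ ?_ ?_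
  · intro a ha
    simp only [mem_Icc] at ha ⊢
    omega
  · intro a ha
    simp only [mem_Icc] at ha ⊢
    omega
  · intro a ha
    simp only [mem_Icc] at ha
    omega
  · intro a ha
    simp only [mem_Icc] at ha
    omega
  · intro a ha
    simp only [mem_Icc] at ha
    congr 1
    have : ((s + 1 - a : ℕ) : ℝ) = (s:ℝ) + 1 - a := by
      push_cast [Nat.cast_sub (by omega : a ≤ s + 1)]; ring
    rw [this]; ring

lemma hhat_nat_pos_one {u : ℕ} (hu : 1 ≤ u) : hhat 0 (u : ℝ) = 1 := by
  have := Real.Gamma_pos_of_pos (s := (u:ℝ)) (by exact_mod_cast hu)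
  simp [hhat, Real.Gamma_one, div_self this.ne']

lemma sum_hhat {α : ℝ} (hα : α + 1 ≠ 0) (hΓ : Real.Gamma (α + 1) ≠ 0)
    (hpos : ∀ v : ℕ, 1 ≤ v → (v : ℝ) + α ≠ 0) (s : ℕ) :
    ∑ v ∈ Icc 1 s, hhat α (v : ℝ) = hhat (α + 1) (s : ℝ) := by
  induction s with
  | zero => simp [hhat_x_zero]
  | succ k ih =>
    rw [Finset.sum_Icc_succ_top (by omega), ih]
    have hp := hhat_pascal (α := α + 1) hα hΓ (k + 1) (by omega)
      (by push_cast; have := hpos (k+1) (by omega); push_cast at this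
          intro h; apply this; linarith)
    rw [add_sub_cancel_right] at hp
    push_cast at hp ⊢
    have e : (k:ℝ) + 1 - 1 = (k:ℝ) := by ring
    rw [e] at hp
    linarith

lemma sum_Icc_shift (F : ℕ → ℝ) (s : ℕ) :
    ∑ u ∈ Icc 1 (s + 1), F u = F 1 + ∑ v ∈ Icc 1 s, F (v + 1) := by
  have h : Icc 1 (s + 1) = insert 1 (Icc 2 (s + 1)) := by
    ext a; simp only [mem_Icc, mem_insert]; omega
  rw [h, Finset.sum_insert (by simp)]
  congr 1
  refine Finset.sum_nbij' (i := fun u => u - 1) (j := fun v => v + 1) ?_ ?_ ?_ ?_ ?_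
  · intro a ha; simp only [mem_Icc] at ha; show a - 1 ∈ Icc 1 s; simp only [mem_Icc]; omega
  · intro a ha; simp only [mem_Icc] at ha; show a + 1 ∈ Icc 2 (s+1); simp only [mem_Icc]; omega
  · intro a ha; simp only [mem_Icc] at ha; show a - 1 + 1 = a; omega
  · intro a ha; simp only [mem_Icc] at ha; show a + 1 - 1 = a; omega
  · intro a ha; simp only [mem_Icc] at ha; congr 1; omega

lemma vdm_nat {q : ℝ} (hq0 : 0 < q) (hq1 : q < 1) (n s : ℕ) :
    ∑ u ∈ Icc 1 s, hhat (-q) ((s : ℝ) - (u : ℝ) + 1) * hhat (n : ℝ) (u : ℝ) =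
      hhat ((n : ℝ) - q + 1) (s : ℝ) := by
  induction n generalizing s with
  | zero =>
    have h1 : ∀ u ∈ Icc 1 s, hhat (-q) ((s : ℝ) - (u : ℝ) + 1) * hhat ((0:ℕ) : ℝ) (u : ℝ)
        = hhat (-q) ((s : ℝ) - (u : ℝ) + 1) := by
      intro u hu
      simp only [mem_Icc] at hu
      rw [Nat.cast_zero, hhat_nat_pos_one hu.1, mul_one]
    rw [Finset.sum_congr rfl h1, sum_reflect (hhat (-q)) s]
    have := sum_hhat (α := -q) (by intro h; linarith) 
      (by rw [neg_add_eq_sub]; exact (Real.Gamma_pos_of_pos (by linarith)).ne')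
      (by intro v hv; have : (1:ℝ) ≤ v := by exact_mod_cast hv
          intro h; linarith) s
    rw [this]
    norm_num
  | succ n ihn =>
    induction s with
    | zero => simp [hhat_x_zero]
    | succ k ihs =>
      have step1 : ∀ u ∈ Icc 1 (k+1),
          hhat (-q) (((k+1:ℕ) : ℝ) - (u : ℝ) + 1) * hhat ((n+1:ℕ) : ℝ) (u : ℝ) =
          hhat (-q) (((k+1:ℕ) : ℝ) - (u : ℝ) + 1) * hhat ((n:ℕ) : ℝ) (u : ℝ)
          + hhat (-q) (((k+1:ℕ) : ℝ) - (u : ℝ) + 1) * hhat ((n+1:ℕ) : ℝ) ((u : ℝ) - 1) := by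
        intro u hu
        simp only [mem_Icc] at hu
        have hp := hhat_pascal (α := ((n+1:ℕ):ℝ)) (by positivity)
          (Real.Gamma_pos_of_pos (by positivity)).ne' u hu.1
          (by push_cast
              have h1 : (1:ℝ) ≤ (u:ℝ) := by exact_mod_cast hu.1
              have h2 : (0:ℝ) ≤ (n:ℝ) := Nat.cast_nonneg n
              intro h; linarith)
        have e : ((n+1:ℕ):ℝ) - 1 = ((n:ℕ):ℝ) := by push_cast; ring
        rw [hp, e, mul_add]
      rw [Finset.sum_congr rfl step1, Finset.sum_add_distrib, ihn (k+1)]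
      have step2 : ∑ u ∈ Icc 1 (k+1),
          hhat (-q) (((k+1:ℕ) : ℝ) - (u : ℝ) + 1) * hhat ((n+1:ℕ) : ℝ) ((u : ℝ) - 1)
          = hhat (((n+1:ℕ) : ℝ) - q + 1) (k : ℝ) := by
        rw [sum_Icc_shift (fun u => hhat (-q) (((k+1:ℕ) : ℝ) - (u : ℝ) + 1)
            * hhat ((n+1:ℕ) : ℝ) ((u : ℝ) - 1)) k]
        simp only [Nat.cast_one, sub_self, hhat_x_zero, mul_zero, zero_add]
        rw [← ihs]
        · apply Finset.sum_congr rfl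
          intro v hv
          push_cast
          ring_nf
      rw [step2]
      have hp2 := hhat_pascal (α := (n:ℝ) - q + 2) (by push_cast; have : (0:ℝ) ≤ (n:ℝ) := Nat.cast_nonneg n; intro h; linarith)
        (Real.Gamma_pos_of_pos (by have : (0:ℝ) ≤ (n:ℝ) := Nat.cast_nonneg n; linarith)).ne'
        (k+1) (by omega)
        (by push_cast
            have h2 : (0:ℝ) ≤ (n:ℝ) := Nat.cast_nonneg n
            have h3 : (0:ℝ) ≤ (k:ℝ) := Nat.cast_nonneg k
            intro h; linarith)
      push_cast at hp2 ⊢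
      have e1 : (n:ℝ) - q + 2 - 1 = (n:ℝ) - q + 1 := by ring
      have e2 : (n:ℝ) + 1 - q + 1 = (n:ℝ) - q + 2 := by ring
      rw [e1] at hp2
      rw [e2]
      have e3 : (k:ℝ) + 1 - 1 = (k:ℝ) := by ring
      rw [e3] at hp2
      linarith

lemma vdm_real {q : ℝ} (hq0 : 0 < q) (hq1 : q < 1) {β : ℝ} (hβ : 0 ≤ β) (s : ℕ) :
    ∑ u ∈ Icc 1 s, hhat (-q) ((s : ℝ) - (u : ℝ) + 1) * hhat β (u : ℝ)
      = hhat (β - q + 1) (s : ℝ) := by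
  rcases Nat.eq_zero_or_pos s with rfl | hs
  · simp [hhat_x_zero]
  set P : Polynomial ℝ := ∑ u ∈ Icc 1 s,
      Polynomial.C (hhat (-q) ((s:ℝ) - u + 1) / Real.Gamma u)
        * ∏ j ∈ range (u-1), (Polynomial.X + Polynomial.C ((j:ℝ)+1)) with hP
  set Q : Polynomial ℝ := Polynomial.C (Real.Gamma s)⁻¹
      * ∏ j ∈ range (s-1), (Polynomial.X + Polynomial.C (2 - q + (j:ℝ))) with hQ
  have hevalP : ∀ x : ℝ, -1 < x → Polynomial.eval x P
      = ∑ u ∈ Icc 1 s, hhat (-q) ((s:ℝ) - u + 1) * hhat x u := by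
    intro x hx
    rw [hP, Polynomial.eval_finset_sum]
    apply Finset.sum_congr rfl
    intro u hu
    simp only [mem_Icc] at hu
    rw [Polynomial.eval_mul, Polynomial.eval_C, Polynomial.eval_prod]
    simp only [Polynomial.eval_add, Polynomial.eval_X, Polynomial.eval_C]
    rw [hhat_prod hx hu.1]
    have : ∏ j ∈ range (u-1), (x + ((j:ℝ)+1)) = ∏ j ∈ range (u-1), (x + 1 + (j:ℝ)) := by
      apply Finset.prod_congr rfl; intros; ring
    rw [this]
    ring
  have hevalQ : ∀ x : ℝ, -1 < x → Polynomial.eval x Q = hhat (x - q + 1) (s:ℝ) := by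
    intro x hx
    rw [hQ, Polynomial.eval_mul, Polynomial.eval_C, Polynomial.eval_prod]
    simp only [Polynomial.eval_add, Polynomial.eval_X, Polynomial.eval_C]
    rw [hhat_prod (x := x - q + 1) (by linarith) hs]
    have : ∏ j ∈ range (s-1), (x + (2 - q + (j:ℝ)))
        = ∏ j ∈ range (s-1), (x - q + 1 + 1 + (j:ℝ)) := by
      apply Finset.prod_congr rfl; intros; ring
    rw [this]
    ring
  have hPQ : P = Q := by
    apply Polynomial.eq_of_infinite_eval_eq
    refine Set.Infinite.mono ?_ (Set.infinite_range_of_injective (Nat.cast_injective (R := ℝ)))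
    rintro x ⟨n, rfl⟩
    simp only [Set.mem_setOf_eq]
    have hn : (-1:ℝ) < n := by
      have : (0:ℝ) ≤ n := Nat.cast_nonneg n
      linarith
    rw [hevalP _ hn, hevalQ _ hn, vdm_nat hq0 hq1 n s]
  calc ∑ u ∈ Icc 1 s, hhat (-q) ((s : ℝ) - (u : ℝ) + 1) * hhat β (u : ℝ)
      = Polynomial.eval β P := (hevalP β (by linarith)).symm
    _ = Polynomial.eval β Q := by rw [hPQ]
    _ = hhat (β - q + 1) (s:ℝ) := hevalQ β (by linarith)

lemma hhat_nonneg {x : ℝ} (hx : -1 < x) {s : ℕ} (hs : 1 ≤ s) : 0 ≤ hhat x (s:ℝ) := by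
  rw [hhat_prod hx hs]
  apply div_nonneg
  · apply Finset.prod_nonneg
    intro j hj
    have : (0:ℝ) ≤ j := Nat.cast_nonneg j
    linarith
  · exact (Real.Gamma_pos_of_pos (by exact_mod_cast hs)).le

lemma summable_hhat {q lam : ℝ} (hq0 : 0 < q) (hq1 : q < 1) (hlam : |lam| < 1)
    {γ : ℝ} (hγ : -1 < γ) (hγ1 : γ ≤ 1) {s : ℕ} (hs : 1 ≤ s) :
    Summable (fun m : ℕ => hhat (q * m + γ) (s : ℝ) * lam ^ m) := by
  have hΓs : 0 < Real.Gamma (s : ℝ) := Real.Gamma_pos_of_pos (by exact_mod_cast hs)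
  set C : ℝ := ((s:ℝ) + 3) ^ (s - 1) / Real.Gamma s with hC
  have hsum : Summable (fun m : ℕ => C * ((m:ℝ) ^ (s-1) * |lam| ^ m)) := by
    apply Summable.mul_left
    exact summable_pow_mul_geometric_of_norm_lt_one (R := ℝ) (s-1)
      (by rwa [Real.norm_eq_abs, abs_abs])
  apply Summable.of_norm_bounded_eventually_nat hsum
  rw [Filter.eventually_atTop]
  refine ⟨1, fun m hm => ?_⟩
  have hx : -1 < q * m + γ := by
    have : (0:ℝ) ≤ q * m := by positivity
    linarith
  have hm1 : (1:ℝ) ≤ (m:ℝ) := by exact_mod_cast hm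
  have hs1 : (1:ℝ) ≤ (s:ℝ) := by exact_mod_cast hs
  have hbound : hhat (q * m + γ) (s:ℝ) ≤ C * (m:ℝ) ^ (s-1) := by
    rw [hhat_prod hx hs]
    have h1 : ∏ j ∈ range (s-1), (q * m + γ + 1 + (j:ℝ))
        ≤ ((m:ℝ) + (s:ℝ) + 2) ^ (s-1) := by
      calc ∏ j ∈ range (s-1), (q * m + γ + 1 + (j:ℝ))
          ≤ ∏ _j ∈ range (s-1), ((m:ℝ) + (s:ℝ) + 2) := by
            apply Finset.prod_le_prod
            · intro j hj
              have : (0:ℝ) ≤ j := Nat.cast_nonneg j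
              have : (0:ℝ) ≤ q * m := by positivity
              linarith
            · intro j hj
              have hj1 : (j:ℝ) ≤ (s:ℝ) := by
                have := Finset.mem_range.mp hj
                have : (j:ℝ) < ((s-1:ℕ):ℝ) := by exact_mod_cast this
                have : ((s-1:ℕ):ℝ) ≤ (s:ℝ) := by exact_mod_cast Nat.sub_le s 1
                linarith
              have hqm : q * m ≤ (m:ℝ) := by nlinarith
              linarith
        _ = ((m:ℝ) + (s:ℝ) + 2) ^ (s-1) := by
            rw [Finset.prod_const, Finset.card_range]
    have h2 : ((m:ℝ) + (s:ℝ) + 2) ^ (s-1) ≤ (((s:ℝ) + 3) * (m:ℝ)) ^ (s-1) := by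
      apply pow_le_pow_left₀ (by linarith)
      nlinarith
    rw [mul_pow] at h2
    have : C * (m:ℝ) ^ (s-1) = (((s:ℝ) + 3) ^ (s-1) * (m:ℝ) ^ (s-1)) / Real.Gamma s := by
      rw [hC]; ring
    rw [this]
    exact div_le_div₀ (by positivity) (h1.trans h2) hΓs le_rfl
  have hnn := hhat_nonneg hx hs
  calc ‖hhat (q * m + γ) (s:ℝ) * lam ^ m‖
      = hhat (q * m + γ) (s:ℝ) * |lam| ^ m := by
        rw [Real.norm_eq_abs, abs_mul, abs_of_nonneg hnn, abs_pow]
    _ ≤ (C * (m:ℝ) ^ (s-1)) * |lam| ^ m := by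
        apply mul_le_mul_of_nonneg_right hbound (by positivity)
    _ = C * ((m:ℝ) ^ (s-1) * |lam| ^ m) := by ring

lemma fracSum_tsum {q lam : ℝ} (hq0 : 0 < q) (hq1 : q < 1) (hlam : |lam| < 1) (s : ℕ) :
    fracSumML q lam s = ∑' m : ℕ, hhat (q * m - q + 1) (s : ℝ) * lam ^ m := by
  rcases Nat.eq_zero_or_pos s with rfl | hs
  · simp [fracSumML, hhat_x_zero]
  · unfold fracSumML
    have h1 : ∀ u ∈ Icc 1 s, hhat (-q) ((s:ℝ) - (u:ℝ) + 1) * dML q lam u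
        = ∑' m : ℕ, hhat (-q) ((s:ℝ) - (u:ℝ) + 1) * (hhat (q * m) (u:ℝ) * lam ^ m) := by
      intro u hu
      simp only [mem_Icc] at hu
      rw [dML, if_neg (by omega), ← tsum_mul_left]
    rw [Finset.sum_congr rfl h1, ← Summable.tsum_finsetSum ?hsummable]
    case hsummable =>
      intro u hu
      simp only [mem_Icc] at hu
      apply Summable.mul_left
      have := summable_hhat (lam := lam) hq0 hq1 hlam (γ := 0)
        (by norm_num) (by norm_num) hu.1
      simpa using this
    apply tsum_congr
    intro m
    have h2 : ∀ u ∈ Icc 1 s, hhat (-q) ((s:ℝ) - (u:ℝ) + 1) * (hhat (q * m) (u:ℝ) * lam ^ m)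
        = (hhat (-q) ((s:ℝ) - (u:ℝ) + 1) * hhat (q * m) (u:ℝ)) * lam ^ m := by
      intro u hu; ring
    rw [Finset.sum_congr rfl h2, ← Finset.sum_mul,
      vdm_real hq0 hq1 (by positivity : (0:ℝ) ≤ q * m) s]

/-- The Riemann–Liouville fractional difference of order `q` of the discrete Mittag-Leffler
function: `∇_1^q F_{q,λ}(t) = D(t) − D(t−1) = ĥ_{−q}(t) + λ·F_{q,λ}(t)`. -/
theorem frac_diff_dML (q lam : ℝ) (hq0 : 0 < q) (hq1 : q < 1) (hlam : |lam| < 1)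
    (t : ℕ) (ht : 1 ≤ t) :
    fracSumML q lam t - fracSumML q lam (t - 1) =
      hhat (-q) (t : ℝ) + lam * dML q lam t := by
  have hcast : ((t - 1 : ℕ) : ℝ) = (t:ℝ) - 1 := by
    push_cast [Nat.cast_sub ht]; ring
  have ht1 : (1:ℝ) ≤ (t:ℝ) := by exact_mod_cast ht
  have hsum1 : Summable (fun m : ℕ => hhat (q * m - q + 1) (t:ℝ) * lam ^ m) := by
    have := summable_hhat (lam := lam) hq0 hq1 hlam (γ := 1 - q)
      (by linarith) (by linarith) ht
    apply this.congr
    intro m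
    ring_nf
  have hsum2 : Summable (fun m : ℕ => hhat (q * m - q + 1) ((t - 1 : ℕ):ℝ) * lam ^ m) := by
    rcases Nat.eq_zero_or_pos (t - 1) with h | h
    · rw [h]
      apply summable_zero.congr
      intro m
      simp [hhat_x_zero]
    · have := summable_hhat (lam := lam) hq0 hq1 hlam (γ := 1 - q)
        (by linarith) (by linarith) h
      apply this.congr
      intro m
      ring_nf
  have hsum3 : Summable (fun m : ℕ => hhat (q * m - q) (t:ℝ) * lam ^ m) := by
    have := summable_hhat (lam := lam) hq0 hq1 hlam (γ := -q)
      (by linarith) (by linarith) ht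
    apply this.congr
    intro m
    ring_nf
  rw [fracSum_tsum hq0 hq1 hlam t, fracSum_tsum hq0 hq1 hlam (t-1),
    ← Summable.tsum_sub hsum1 hsum2]
  have hps : ∀ m : ℕ, hhat (q * m - q + 1) (t:ℝ) * lam ^ m
      - hhat (q * m - q + 1) ((t - 1 : ℕ):ℝ) * lam ^ m
      = hhat (q * m - q) (t:ℝ) * lam ^ m := by
    intro m
    have hm0 : (0:ℝ) ≤ q * m := by positivity
    have hp := hhat_pascal (α := q * m - q + 1) (by linarith)
      (Real.Gamma_pos_of_pos (by linarith)).ne' t ht (by intro h; nlinarith)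
    have e1 : q * (m:ℝ) - q + 1 - 1 = q * m - q := by ring
    rw [e1] at hp
    rw [hcast]
    rw [hp]
    ring
  rw [tsum_congr hps, Summable.tsum_eq_zero_add hsum3]
  have e0 : hhat (q * (0:ℕ) - q) (t:ℝ) * lam ^ (0:ℕ) = hhat (-q) (t:ℝ) := by
    norm_num
  rw [e0]
  congr 1
  have hshift : ∀ m : ℕ, hhat (q * ((m+1:ℕ):ℝ) - q) (t:ℝ) * lam ^ (m+1)
      = lam * (hhat (q * m) (t:ℝ) * lam ^ m) := by
    intro m
    have e : q * ((m+1:ℕ):ℝ) - q = q * m := by push_cast; ring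
    rw [e]
    ring
  rw [tsum_congr hshift, tsum_mul_left, dML, if_neg (by omega)]
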